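/- For every alphabet size σ ≥ 2 and all integers j ≥ 1 and i ≥ j + 1, the number of unbordered strings of length i whose first letter differs from each of the following j letters satisfies b_j(i, σ) ≥ (σ−1)^{j+1} · σ^{i−j−1} − σ^{i−2}. -/

import Mathlib

open List Finset Filter

/-- `S` is unbordered: it has no nonempty proper prefix that is also a suffix. -/
def Unbordered {α : Type*} (S : List α) : Prop :=
  ∀ B : List α, B ≠ [] → B.length < S.length → B <+: S → ¬ B <:+ S

/-- The length of the maximal unbordered factor of `S`. -/
noncomputable def muf {α : Type*} (S : List α) : ℕ :=
  sSup {k | ∃ F : List α, F <:+: S ∧ Unbordered F ∧ F.length = k}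


/-- `unbCountJ σ i j` : the number of unbordered strings of length `i` over an alphabet
of size `σ` whose first letter differs from each of the `j` letters that follow it. -/
noncomputable def unbCountJ (σ i j : ℕ) : ℕ :=
  Nat.card {f : Fin i → Fin σ //
    Unbordered (List.ofFn f) ∧
    ∀ k l : Fin i, 1 ≤ (k : ℕ) → (k : ℕ) ≤ j → (l : ℕ) = 0 → f k ≠ f l}

lemma exists_period (σ n : ℕ) (f : Fin n → Fin σ) (h : ¬ Unbordered (List.ofFn f)) :
    ∃ p, 1 ≤ p ∧ p + 1 ≤ n ∧ ∀ m : Fin n, ∀ hm : (m : ℕ) + p < n, f m = f ⟨(m : ℕ) + p, hm⟩ := by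
  rw [Unbordered] at h; push_neg at h
  obtain ⟨B, hB0, hBlen, hpre, hsuf⟩ := h
  have hlen : (List.ofFn f).length = n := List.length_ofFn
  have hl1 : 1 ≤ B.length := List.length_pos_iff.mpr hB0
  have hln : B.length < n := by rwa [hlen] at hBlen
  refine ⟨n - B.length, by omega, by omega, ?_⟩
  intro m hm
  have hmℓ : (m : ℕ) < B.length := by omega
  have e1 := hpre.getElem (i := (m : ℕ)) hmℓ
  have e2 := hsuf.getElem (i := (m : ℕ)) hmℓ
  rw [e1] at e2
  rw [List.getElem_ofFn, List.getElem_ofFn] at e2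
  convert e2 using 2
  exact Fin.ext (by simp [hlen]; omega)

lemma period_ext {σ n p : ℕ} (hpn : p ≤ n) (hp : 0 < p) (f g : Fin n → Fin σ)
    (hf : ∀ m : Fin n, ∀ h : (m : ℕ) + p < n, f m = f ⟨(m : ℕ) + p, h⟩)
    (hg : ∀ m : Fin n, ∀ h : (m : ℕ) + p < n, g m = g ⟨(m : ℕ) + p, h⟩)
    (hfg : ∀ k : Fin p, f (Fin.castLE hpn k) = g (Fin.castLE hpn k)) : f = g := by
  have key : ∀ v : ℕ, ∀ hv : v < n, f ⟨v, hv⟩ = g ⟨v, hv⟩ := by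
    intro v
    induction v using Nat.strong_induction_on with
    | _ v ih =>
      intro hv
      by_cases hvp : v < p
      · exact hfg ⟨v, hvp⟩
      · have hle : p ≤ v := le_of_not_gt hvp
        have hw : v - p < n := by omega
        have hwp : ((⟨v - p, hw⟩ : Fin n) : ℕ) + p < n := by simp; omega
        have h1 := hf ⟨v - p, hw⟩ hwp
        have h2 := hg ⟨v - p, hw⟩ hwp
        have ihv := ih (v - p) (by omega) hw
        have e : (⟨v, hv⟩ : Fin n) = ⟨((⟨v - p, hw⟩ : Fin n) : ℕ) + p, hwp⟩ :=
          Fin.ext (by simp; omega)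
        rw [e, ← h1, ← h2]
        exact ihv
  funext m
  have := key m.val m.isLt
  simpa [Fin.eta] using this

lemma geom_sum_nat (σ m : ℕ) (hσ : 1 ≤ σ) :
    (σ - 1) * (∑ t ∈ Finset.range m, σ ^ t) + 1 = σ ^ m := by
  induction m with
  | zero => simp
  | succ m ih =>
    calc (σ - 1) * (∑ t ∈ Finset.range (m+1), σ ^ t) + 1
        = ((σ - 1) * (∑ t ∈ Finset.range m, σ ^ t) + 1) + (σ - 1) * σ ^ m := by
          rw [Finset.sum_range_succ]; ring
      _ = (1 + (σ - 1)) * σ ^ m := by rw [ih]; ring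
      _ = σ * σ ^ m := by rw [show 1 + (σ - 1) = σ from by omega]
      _ = σ ^ (m + 1) := (pow_succ' σ m).symm

lemma card_constr (σ n : ℕ) (hn : 0 < n) (K : Finset (Fin n)) (h0 : (⟨0, hn⟩ : Fin n) ∉ K) :
    (Finset.univ.filter (fun f : Fin n → Fin σ => ∀ k ∈ K, f k ≠ f ⟨0, hn⟩)).card
      = σ * (σ - 1) ^ K.card * σ ^ (n - 1 - K.card) := by
  classical
  set z : Fin n := ⟨0, hn⟩ with hz
  have hset : (Finset.univ.filter (fun f : Fin n → Fin σ => ∀ k ∈ K, f k ≠ f z))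
      = Finset.univ.biUnion (fun a : Fin σ => Fintype.piFinset
        (fun k => if k = z then {a} else if k ∈ K then Finset.univ.erase a else Finset.univ)) := by
    ext f
    constructor
    · intro hf
      have hf' := (Finset.mem_filter.mp hf).2
      rw [Finset.mem_biUnion]
      refine ⟨f z, Finset.mem_univ _, Fintype.mem_piFinset.mpr fun k => ?_⟩
      by_cases h1 : k = z
      · simp [h1]
      · by_cases h2 : k ∈ K
        · simp [h1, h2, Finset.mem_erase, Ne, hf' k h2]
        · simp [h1, h2]
    · intro hmem
      obtain ⟨a, -, ha⟩ := Finset.mem_biUnion.mp hmem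
      rw [Fintype.mem_piFinset] at ha
      refine Finset.mem_filter.mpr ⟨Finset.mem_univ _, fun k hk => ?_⟩
      have hzz := ha z
      simp at hzz
      have hkk := ha k
      have hkz : k ≠ z := fun h => h0 (h ▸ hk)
      simp [hkz, hk, Finset.mem_erase] at hkk
      rw [hzz]
      exact hkk
  rw [hset, Finset.card_biUnion]
  · have hcard : ∀ a : Fin σ, (Fintype.piFinset
        (fun k => if k = z then ({a} : Finset (Fin σ)) else if k ∈ K then Finset.univ.erase a else Finset.univ)).card
        = (σ - 1) ^ K.card * σ ^ (n - 1 - K.card) := by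
      intro a
      rw [Fintype.card_piFinset]
      have : ∀ k : Fin n, (if k = z then ({a} : Finset (Fin σ)) else if k ∈ K then Finset.univ.erase a else Finset.univ).card
          = if k = z then 1 else if k ∈ K then σ - 1 else σ := by
        intro k
        split_ifs with h1 h2
        · simp
        · simp [Finset.card_erase_of_mem]
        · simp
      rw [Finset.prod_congr rfl (fun k _ => this k)]
      have hsub : insert z K ⊆ Finset.univ := Finset.subset_univ _
      rw [← Finset.prod_sdiff hsub]
      have h1 : (∏ k ∈ insert z K, (if k = z then 1 else if k ∈ K then σ - 1 else σ))
          = (σ - 1) ^ K.card := by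
        rw [Finset.prod_insert h0, if_pos rfl, one_mul]
        rw [Finset.prod_congr rfl (fun k hk => ?_), Finset.prod_const]
        have : k ≠ z := fun h => h0 (h ▸ hk)
        simp [this, hk]
      have h2 : (∏ k ∈ Finset.univ \ insert z K, (if k = z then 1 else if k ∈ K then σ - 1 else σ))
          = σ ^ (n - 1 - K.card) := by
        rw [Finset.prod_congr rfl (fun k hk => ?_), Finset.prod_const]
        · congr 1
          rw [Finset.card_sdiff_of_subset (Finset.subset_univ _), Finset.card_insert_of_notMem h0]
          simp [Nat.sub_sub, Nat.add_comm]
        · simp only [Finset.mem_sdiff, Finset.mem_insert, not_or] at hk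
          simp [hk.2.1, hk.2.2]
      rw [h1, h2, mul_comm]
    rw [Finset.sum_congr rfl (fun a _ => hcard a), Finset.sum_const, Finset.card_univ]
    simp [mul_assoc]
  · intro a _ b _ hab
    simp only [Finset.disjoint_left, Fintype.mem_piFinset]
    intro f hfa hfb
    have h1 := hfa z
    have h2 := hfb z
    simp at h1 h2
    exact hab (h1 ▸ h2)


open scoped Classical in
noncomputable def USet (σ i j : ℕ) : Finset (Fin i → Fin σ) :=
  Finset.univ.filter (fun f => Unbordered (List.ofFn f) ∧
    ∀ k l : Fin i, 1 ≤ (k : ℕ) → (k : ℕ) ≤ j → (l : ℕ) = 0 → f k ≠ f l)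

lemma mem_USet {σ i j : ℕ} (f : Fin i → Fin σ) :
    f ∈ USet σ i j ↔ (Unbordered (List.ofFn f) ∧
      ∀ k l : Fin i, 1 ≤ (k : ℕ) → (k : ℕ) ≤ j → (l : ℕ) = 0 → f k ≠ f l) := by
  simp [USet, Finset.mem_filter]

lemma unbCountJ_eq_card (σ i j : ℕ) : unbCountJ σ i j = (USet σ i j).card := by
  classical
  rw [unbCountJ, Nat.card_eq_fintype_card, Fintype.card_subtype, USet]

open scoped Classical in
noncomputable def CSet (σ n : ℕ) (z : Fin n) (K : Finset (Fin n)) : Finset (Fin n → Fin σ) :=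
  Finset.univ.filter (fun f => ∀ k ∈ K, f k ≠ f z)

lemma mem_CSet {σ n : ℕ} {z : Fin n} {K : Finset (Fin n)} (f : Fin n → Fin σ) :
    f ∈ CSet σ n z K ↔ ∀ k ∈ K, f k ≠ f z := by
  simp [CSet, Finset.mem_filter]

lemma card_CSet (σ n : ℕ) (hn : 0 < n) (K : Finset (Fin n)) (h0 : (⟨0, hn⟩ : Fin n) ∉ K) :
    (CSet σ n ⟨0, hn⟩ K).card = σ * (σ - 1) ^ K.card * σ ^ (n - 1 - K.card) := by
  classical
  rw [← card_constr σ n hn K h0]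
  congr 1

open scoped Classical in
noncomputable def BSet (σ n j p : ℕ) (z : Fin n) : Finset (Fin n → Fin σ) :=
  Finset.univ.filter (fun f =>
    (∀ k : Fin n, 1 ≤ (k : ℕ) → (k : ℕ) ≤ j → f k ≠ f z) ∧
    (∀ m : Fin n, ∀ h : (m : ℕ) + p < n, f m = f ⟨(m : ℕ) + p, h⟩))

lemma mem_BSet {σ n j p : ℕ} {z : Fin n} (f : Fin n → Fin σ) :
    f ∈ BSet σ n j p z ↔
      ((∀ k : Fin n, 1 ≤ (k : ℕ) → (k : ℕ) ≤ j → f k ≠ f z) ∧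
       (∀ m : Fin n, ∀ h : (m : ℕ) + p < n, f m = f ⟨(m : ℕ) + p, h⟩)) := by
  simp [BSet, Finset.mem_filter]

lemma card_BSet_le (σ n p j : ℕ) (hn : 0 < n) (hj1 : 1 ≤ j) (hjp : j + 1 ≤ p) (hpn : p ≤ n) :
    (BSet σ n j p ⟨0, hn⟩).card ≤ σ * (σ - 1) ^ j * σ ^ (p - 1 - j) := by
  classical
  have hp0 : 0 < p := by omega
  have hKlt : ∀ m ∈ Finset.Icc 1 j, m < p := fun m hm => by
    simp only [Finset.mem_Icc] at hm; omega
  set K : Finset (Fin p) := Finset.attachFin (Finset.Icc 1 j) hKlt with hKdef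
  have h0 : (⟨0, hp0⟩ : Fin p) ∉ K := by
    simp [hKdef, Finset.mem_attachFin, Finset.mem_Icc]
  have hKcard : K.card = j := by
    rw [hKdef, Finset.card_attachFin, Nat.card_Icc]; omega
  have target := card_CSet σ p hp0 K h0
  rw [hKcard] at target
  rw [← target]
  apply Finset.card_le_card_of_injOn (fun f (k : Fin p) => f (Fin.castLE hpn k))
  · intro f hf
    rw [Finset.mem_coe, mem_BSet] at hf
    rw [Finset.mem_coe, mem_CSet]
    intro k hk
    have hkv : (k : ℕ) ∈ Finset.Icc 1 j := (Finset.mem_attachFin hKlt).mp hk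
    rw [Finset.mem_Icc] at hkv
    exact hf.1 (Fin.castLE hpn k) (by simpa using hkv.1) (by simpa using hkv.2)
  · intro f hf g hg hfg
    simp only [Finset.mem_coe] at hf hg
    rw [mem_BSet] at hf hg
    exact period_ext hpn hp0 f g hf.2 hg.2 (fun k => congrFun hfg k)


theorem unbCountJ_lower_bound (σ i j : ℕ) (hσ : 2 ≤ σ) (hj : 1 ≤ j) (hi : j + 1 ≤ i) :
    ((σ : ℝ) - 1) ^ (j + 1) * (σ : ℝ) ^ (i - j - 1) - (σ : ℝ) ^ (i - 2) ≤
      (unbCountJ σ i j : ℝ) := by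
  classical
  have hi0 : 0 < i := by omega
  have hσ1 : 1 ≤ σ := by omega
  have hcount : unbCountJ σ i j = (USet σ i j).card := unbCountJ_eq_card σ i j
  have hcastsub : ((σ - 1 : ℕ) : ℝ) = (σ : ℝ) - 1 := by
    rw [Nat.cast_sub hσ1, Nat.cast_one]
  have hKlt : ∀ m ∈ Finset.Icc 1 j, m < i := by
    intro m hm; rw [Finset.mem_Icc] at hm; omega
  by_cases hcase : i = j + 1
  · -- small case : every constrained string is unbordered
    set K : Finset (Fin i) := Finset.attachFin (Finset.Icc 1 j) hKlt with hKdef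
    have h0 : (⟨0, hi0⟩ : Fin i) ∉ K := by
      simp [hKdef, Finset.mem_attachFin, Finset.mem_Icc]
    have hKcard : K.card = j := by
      rw [hKdef, Finset.card_attachFin, Nat.card_Icc]; omega
    have hT := card_CSet σ i hi0 K h0
    rw [hKcard] at hT
    have hsub : CSet σ i ⟨0, hi0⟩ K ⊆ USet σ i j := by
      intro f hf
      rw [mem_CSet] at hf
      have hcon : ∀ k : Fin i, 1 ≤ (k : ℕ) → (k : ℕ) ≤ j → f k ≠ f ⟨0, hi0⟩ := by
        intro k h1 h2
        exact hf k (by rw [hKdef, Finset.mem_attachFin, Finset.mem_Icc]; exact ⟨h1, h2⟩)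
      rw [mem_USet]
      constructor
      · by_contra hu
        obtain ⟨p, hp1, hp2, hper⟩ := exists_period σ i f hu
        have hzp : ((⟨0, hi0⟩ : Fin i) : ℕ) + p < i := by simp; omega
        have h00 := hper ⟨0, hi0⟩ hzp
        exact hcon ⟨((⟨0, hi0⟩ : Fin i) : ℕ) + p, hzp⟩ (by simp; omega) (by simp; omega)
          h00.symm
      · intro k l h1 h2 hl
        have : l = ⟨0, hi0⟩ := Fin.ext hl
        rw [this]
        exact hcon k h1 h2
    have hnat : (σ - 1) ^ (j + 1) ≤ unbCountJ σ i j := by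
      calc (σ - 1) ^ (j + 1) = (σ - 1) * (σ - 1) ^ j := by rw [pow_succ']
        _ ≤ σ * ((σ - 1) ^ j * σ ^ (i - 1 - j)) := by
            have e1 : σ - 1 ≤ σ := by omega
            have e2 : 0 < σ := by omega
            refine Nat.mul_le_mul e1 ?_
            exact Nat.le_mul_of_pos_right _ (pow_pos e2 _)
        _ = σ * (σ - 1) ^ j * σ ^ (i - 1 - j) := by rw [mul_assoc]
        _ ≤ unbCountJ σ i j := by
            rw [hcount, ← hT]; exact Finset.card_le_card hsub
    have hij1 : i - j - 1 = 0 := by omega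
    have hcast : ((σ - 1 : ℕ) ^ (j + 1) : ℝ) ≤ (unbCountJ σ i j : ℝ) := by
      exact_mod_cast hnat
    rw [hcastsub] at hcast
    have hpow : (0 : ℝ) ≤ (σ : ℝ) ^ (i - 2) := by positivity
    rw [hij1, pow_zero, mul_one]
    linarith
  · -- main case : i ≥ j + 2
    have hji : j + 2 ≤ i := by omega
    have hlastlt : i - 1 < i := by omega
    set KT : Finset (Fin i) :=
      insert ⟨i - 1, hlastlt⟩ (Finset.attachFin (Finset.Icc 1 j) hKlt) with hKTdef
    have hlast_not : (⟨i - 1, hlastlt⟩ : Fin i) ∉ Finset.attachFin (Finset.Icc 1 j) hKlt := by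
      simp [Finset.mem_attachFin, Finset.mem_Icc]; omega
    have h0T : (⟨0, hi0⟩ : Fin i) ∉ KT := by
      rw [hKTdef, Finset.mem_insert]
      push_neg
      constructor
      · intro h
        have := congrArg Fin.val h
        simp at this; omega
      · simp [Finset.mem_attachFin, Finset.mem_Icc]
    have hKTcard : KT.card = j + 1 := by
      rw [hKTdef, Finset.card_insert_of_notMem hlast_not, Finset.card_attachFin,
        Nat.card_Icc]
      omega
    have hT := card_CSet σ i hi0 KT h0T
    rw [hKTcard] at hT
    have cover : CSet σ i ⟨0, hi0⟩ KT
        ⊆ USet σ i j ∪ (Finset.Icc (j + 1) (i - 2)).biUnion (fun p => BSet σ i j p ⟨0, hi0⟩) := by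
      intro f hf
      rw [Finset.mem_union]
      rw [mem_CSet] at hf
      have hcon : ∀ k : Fin i, 1 ≤ (k : ℕ) → (k : ℕ) ≤ j → f k ≠ f ⟨0, hi0⟩ := by
        intro k h1 h2
        refine hf k ?_
        rw [hKTdef, Finset.mem_insert]
        right
        rw [Finset.mem_attachFin, Finset.mem_Icc]
        exact ⟨h1, h2⟩
      by_cases hu : Unbordered (List.ofFn f)
      · left
        rw [mem_USet]
        refine ⟨hu, ?_⟩
        intro k l h1 h2 hl
        have : l = ⟨0, hi0⟩ := Fin.ext hl
        rw [this]
        exact hcon k h1 h2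
      · right
        obtain ⟨p, hp1, hp2, hper⟩ := exists_period σ i f hu
        have hzp : ((⟨0, hi0⟩ : Fin i) : ℕ) + p < i := by simp; omega
        have h00 := hper ⟨0, hi0⟩ hzp
        by_cases hpj : p ≤ j
        · exact absurd h00.symm (hcon ⟨((⟨0, hi0⟩ : Fin i) : ℕ) + p, hzp⟩
            (by simp; omega) (by simp; omega))
        · by_cases hpi : p = i - 1
          · exfalso
            refine hf ⟨((⟨0, hi0⟩ : Fin i) : ℕ) + p, hzp⟩ ?_ h00.symm
            rw [hKTdef, Finset.mem_insert]
            left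
            exact Fin.ext (by simp; omega)
          · refine Finset.mem_biUnion.mpr ⟨p, Finset.mem_Icc.mpr ⟨by omega, by omega⟩, ?_⟩
            rw [mem_BSet]
            exact ⟨hcon, hper⟩
    have step1 : σ * (σ - 1) ^ (j + 1) * σ ^ (i - 1 - (j + 1))
        ≤ (USet σ i j).card + ∑ p ∈ Finset.Icc (j + 1) (i - 2), (BSet σ i j p ⟨0, hi0⟩).card := by
      rw [← hT]
      refine le_trans (Finset.card_le_card cover) ?_
      refine le_trans (Finset.card_union_le _ _) ?_
      exact Nat.add_le_add_left (Finset.card_biUnion_le) _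
    have step2 : ∑ p ∈ Finset.Icc (j + 1) (i - 2), (BSet σ i j p ⟨0, hi0⟩).card
        ≤ ∑ p ∈ Finset.Icc (j + 1) (i - 2), σ * (σ - 1) ^ j * σ ^ (p - 1 - j) := by
      refine Finset.sum_le_sum ?_
      intro p hp
      rw [Finset.mem_Icc] at hp
      exact card_BSet_le σ i p j hi0 hj hp.1 (by omega)
    have hsum_eq : ∑ p ∈ Finset.Icc (j + 1) (i - 2), σ * (σ - 1) ^ j * σ ^ (p - 1 - j)
        = σ * (σ - 1) ^ j * ∑ t ∈ Finset.range (i - 1 - (j + 1)), σ ^ t := by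
      rw [Finset.mul_sum]
      rw [show Finset.Icc (j + 1) (i - 2) = Finset.Ico (j + 1) (i - 1) by
        rw [← Finset.Ico_add_one_right_eq_Icc]; congr 1; omega]
      rw [Finset.sum_Ico_eq_sum_range]
      refine Finset.sum_congr rfl ?_
      intro t _
      rw [show j + 1 + t - 1 - j = t from by omega]
    have step3 : σ * (σ - 1) ^ j * ∑ t ∈ Finset.range (i - 1 - (j + 1)), σ ^ t
        ≤ σ ^ (i - 2) := by
      set M := i - 1 - (j + 1) with hM
      have hgeom := geom_sum_nat σ M hσ1
      have hgle : (σ - 1) * (∑ t ∈ Finset.range M, σ ^ t) ≤ σ ^ M := by omega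
      have e1 : (σ - 1) ^ j = (σ - 1) ^ (j - 1) * (σ - 1) := by
        rw [← pow_succ]; congr 1; omega
      calc σ * (σ - 1) ^ j * ∑ t ∈ Finset.range M, σ ^ t
          = σ * (σ - 1) ^ (j - 1) * ((σ - 1) * ∑ t ∈ Finset.range M, σ ^ t) := by
            rw [e1]; ring
        _ ≤ σ * (σ - 1) ^ (j - 1) * σ ^ M := Nat.mul_le_mul (le_refl _) hgle
        _ ≤ σ * σ ^ (j - 1) * σ ^ M := by
            have e2 : σ - 1 ≤ σ := by omega
            exact Nat.mul_le_mul (Nat.mul_le_mul (le_refl _)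
              (Nat.pow_le_pow_left e2 _)) (le_refl _)
        _ = σ ^ (1 + (j - 1) + M) := by rw [pow_add, pow_add, pow_one]
        _ = σ ^ (i - 2) := by rw [show 1 + (j - 1) + M = i - 2 from by omega]
    have hTval : σ * (σ - 1) ^ (j + 1) * σ ^ (i - 1 - (j + 1))
        = (σ - 1) ^ (j + 1) * σ ^ (i - j - 1) := by
      rw [mul_comm σ ((σ - 1) ^ (j + 1)), mul_assoc, ← pow_succ']
      rw [show i - 1 - (j + 1) + 1 = i - j - 1 from by omega]
    have final : (σ - 1) ^ (j + 1) * σ ^ (i - j - 1) ≤ unbCountJ σ i j + σ ^ (i - 2) := by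
      rw [hcount, ← hTval]
      calc σ * (σ - 1) ^ (j + 1) * σ ^ (i - 1 - (j + 1))
          ≤ (USet σ i j).card + ∑ p ∈ Finset.Icc (j + 1) (i - 2), (BSet σ i j p ⟨0, hi0⟩).card :=
            step1
        _ ≤ (USet σ i j).card + σ ^ (i - 2) := by
            refine Nat.add_le_add_left ?_ _
            exact le_trans step2 (le_of_eq hsum_eq |>.trans step3)
    have hcast : ((σ - 1 : ℕ) ^ (j + 1) * σ ^ (i - j - 1) : ℝ)
        ≤ (unbCountJ σ i j : ℝ) + (σ : ℝ) ^ (i - 2) := by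
      exact_mod_cast final
    rw [hcastsub] at hcast
    linarith
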